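/- Let g : X → {-1,+1} be a classifier of the form g = 2·1_C − 1 for a measurable set C ⊆ X with μ(C) = u₀, and let g*_{u₀} = 2·1_{C*_{u₀}} − 1 where C*_{u₀} = {x : η(x) ≥ Q(η, 1−u₀)}. Then L(g*_{u₀}) ≤ L(g), i.e. the classifier based on the set of best instances minimizes the classification error among all classifiers satisfying the mass constraint P(g(X)=1) = u₀. -/

import Mathlib

open MeasureTheory Set

namespace LocalRanking

variable {Ω 𝒳 : Type*} [MeasurableSpace Ω] [MeasurableSpace 𝒳]

/-- The generalized-inverse `v`-quantile of a distribution `μ` on `ℝ`: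
`Q(μ, v) = inf {t : F(t) ≥ v}`. -/
noncomputable def quantile (μ : Measure ℝ) (v : ℝ) : ℝ :=
  sInf {t : ℝ | v ≤ (μ (Iic t)).toReal}

/-- Classification error `P(Y ≠ g(X))` of the classifier `g = 2·1_C − 1` built from a set `C`. -/
noncomputable def errSet (P : Measure Ω) (X : Ω → 𝒳) (Y : Ω → ℝ) (C : Set 𝒳) : ℝ :=
  (P {ω | (Y ω = 1 ∧ X ω ∉ C) ∨ (Y ω = -1 ∧ X ω ∈ C)}).toReal

/-- Among all classifiers `g = 2·1_C − 1` satisfying the mass constraint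
`μ(C) = u₀`, the classifier based on the set of best instances
`C*_{u₀} = {x : η(x) ≥ Q(η, 1−u₀)}` minimizes the classification error `L(g) = P(Y ≠ g(X))`. -/
theorem best_instances_minimize_error
    (P : Measure Ω) [IsProbabilityMeasure P]
    (X : Ω → 𝒳) (Y : Ω → ℝ) (η : 𝒳 → ℝ)
    (hX : Measurable X) (hY : Measurable Y) (hηm : Measurable η)
    (hYval : ∀ ω, Y ω = 1 ∨ Y ω = -1)
    (hηbd : ∀ x, η x ∈ Icc (0 : ℝ) 1)
    -- η is the posterior probability: for every measurable A,
    -- P(X ∈ A, Y = 1) = ∫_A η dμ with μ the law of X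
    (hη : ∀ A : Set 𝒳, MeasurableSet A →
      (P {ω | X ω ∈ A ∧ Y ω = 1}).toReal = ∫ x in A, η x ∂(P.map X))
    (u₀ q : ℝ) (hu₀ : u₀ ∈ Ioo (0 : ℝ) 1)
    -- q is the (1−u₀)-quantile of η(X)
    (hq : q = quantile (P.map fun ω => η (X ω)) (1 - u₀))
    -- no atom issue : P(η(X) ≥ q) = u₀
    (hmass_star : ((P.map X) {x | q ≤ η x}).toReal = u₀)
    (C : Set 𝒳) (hC : MeasurableSet C)
    (hmass : ((P.map X) C).toReal = u₀) :
    errSet P X Y {x | q ≤ η x} ≤ errSet P X Y C := by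
  classical
  set μ := P.map X with hμdef
  haveI : IsProbabilityMeasure μ := Measure.isProbabilityMeasure_map hX.aemeasurable
  set Cs : Set 𝒳 := {x | q ≤ η x} with hCsdef
  have hCs : MeasurableSet Cs := measurableSet_le measurable_const hηm
  have hint : Integrable η μ :=
    (integrable_const (1:ℝ)).mono' hηm.aestronglyMeasurable
      (ae_of_all _ fun x => by
        have h := hηbd x
        rw [Real.norm_eq_abs, abs_le]
        exact ⟨by linarith [h.1], h.2⟩)
  -- error formula
  have key : ∀ (D : Set 𝒳), MeasurableSet D →
      errSet P X Y D
        = (P {ω | Y ω = 1}).toReal + (μ D).toReal - 2 * ∫ x in D, η x ∂μ := by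
    intro D hD
    have hS1 : MeasurableSet {ω | Y ω = 1} := hY (measurableSet_singleton 1)
    have hS2 : MeasurableSet (X ⁻¹' D) := hX hD
    have hEeq : {ω | (Y ω = 1 ∧ X ω ∉ D) ∨ (Y ω = -1 ∧ X ω ∈ D)}
        = ({ω | Y ω = 1} \ X ⁻¹' D) ∪ (X ⁻¹' D \ {ω | Y ω = 1}) := by
      ext ω
      have h1 : Y ω = -1 ↔ ¬ (Y ω = 1) := by
        rcases hYval ω with h | h <;> simp [h] <;> norm_num
      simp only [Set.mem_setOf_eq, Set.mem_union, Set.mem_diff, Set.mem_preimage, h1]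
      tauto
    have hI : (P (X ⁻¹' D ∩ {ω | Y ω = 1})).toReal = ∫ x in D, η x ∂μ := by
      rw [← hη D hD]
      congr 1
    have hmapD : P (X ⁻¹' D) = μ D := (Measure.map_apply hX hD).symm
    have hd1 : P ({ω | Y ω = 1} \ X ⁻¹' D)
        = P {ω | Y ω = 1} - P (X ⁻¹' D ∩ {ω | Y ω = 1}) := by
      rw [← measure_diff inter_subset_right (hS2.inter hS1).nullMeasurableSet
        (measure_ne_top _ _)]
      congr 1
      ext ω; simp only [Set.mem_diff, Set.mem_inter_iff]; tauto
    have hd2 : P (X ⁻¹' D \ {ω | Y ω = 1})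
        = P (X ⁻¹' D) - P (X ⁻¹' D ∩ {ω | Y ω = 1}) := by
      rw [← measure_diff inter_subset_left (hS2.inter hS1).nullMeasurableSet
        (measure_ne_top _ _)]
      congr 1
      ext ω; simp only [Set.mem_diff, Set.mem_inter_iff]; tauto
    have hdisj : Disjoint ({ω | Y ω = 1} \ X ⁻¹' D) (X ⁻¹' D \ {ω | Y ω = 1}) :=
      disjoint_sdiff_sdiff
    have hle1 : P (X ⁻¹' D ∩ {ω | Y ω = 1}) ≤ P {ω | Y ω = 1} :=
      measure_mono inter_subset_right
    have hle2 : P (X ⁻¹' D ∩ {ω | Y ω = 1}) ≤ P (X ⁻¹' D) :=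
      measure_mono inter_subset_left
    rw [errSet, hEeq, measure_union hdisj (hS2.diff hS1), ENNReal.toReal_add
        (measure_ne_top _ _) (measure_ne_top _ _), hd1, hd2,
      ENNReal.toReal_sub_of_le hle1 (measure_ne_top _ _),
      ENNReal.toReal_sub_of_le hle2 (measure_ne_top _ _), hI, hmapD]
    ring
  rw [key C hC, key Cs hCs, hmass, hmass_star]
  have hgoal : ∫ x in C, η x ∂μ ≤ ∫ x in Cs, η x ∂μ := by
    have split_C : (∫ x in C ∩ Cs, η x ∂μ) + ∫ x in C \ Cs, η x ∂μ
        = ∫ x in C, η x ∂μ := integral_inter_add_diff hCs hint.integrableOn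
    have split_Cs : (∫ x in Cs ∩ C, η x ∂μ) + ∫ x in Cs \ C, η x ∂μ
        = ∫ x in Cs, η x ∂μ := integral_inter_add_diff hC hint.integrableOn
    have hmd1 : μ (C \ Cs) = μ C - μ (C ∩ Cs) := by
      rw [← measure_diff inter_subset_left (hC.inter hCs).nullMeasurableSet
        (measure_ne_top _ _), Set.diff_self_inter]
    have hmd2 : μ (Cs \ C) = μ Cs - μ (Cs ∩ C) := by
      rw [← measure_diff inter_subset_left (hCs.inter hC).nullMeasurableSet
        (measure_ne_top _ _), Set.diff_self_inter]
    have hmeq : (μ (C \ Cs)).toReal = (μ (Cs \ C)).toReal := by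
      rw [hmd1, hmd2,
        ENNReal.toReal_sub_of_le (measure_mono inter_subset_left) (measure_ne_top _ _),
        ENNReal.toReal_sub_of_le (measure_mono inter_subset_left) (measure_ne_top _ _),
        Set.inter_comm Cs C]
      rw [hmass, hmass_star]
    have hb1 : ∫ x in C \ Cs, η x ∂μ ≤ q * (μ (C \ Cs)).toReal := by
      have := setIntegral_mono_on hint.integrableOn
        (integrableOn_const (measure_ne_top _ _)) (hC.diff hCs)
        (fun x hx => le_of_lt (not_le.1 hx.2))
      simpa [setIntegral_const, mul_comm, Measure.real] using this
    have hb2 : q * (μ (Cs \ C)).toReal ≤ ∫ x in Cs \ C, η x ∂μ := by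
      have := setIntegral_mono_on
        (integrableOn_const (measure_ne_top _ _)) hint.integrableOn
        (hCs.diff hC) (fun x hx => hx.1)
      simpa [setIntegral_const, mul_comm, Measure.real] using this
    have hic : (∫ x in C ∩ Cs, η x ∂μ) = ∫ x in Cs ∩ C, η x ∂μ := by
      rw [Set.inter_comm]
    rw [hmeq] at hb1
    linarith
  linarith

end LocalRanking
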